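/- Let X, Y and Z be topological spaces and let f : X × Y → Z be a separately continuous function. Suppose: (i) X is a Baire space; (ii) Y is a W̃-space which possesses a rich family 𝔉 all of whose members are Baire spaces; and (iii) Z is a regular space that is fragmented by some metric ρ whose topology contains the topology of Z. Then f is continuous at the points of a dense Gδ subset of X × Y. -/

import Mathlib

open Filter Set Topology

/-- `x` is a W̃-point: player I has a winning strategy in the game G̃(x), where player I
chooses arbitrary nonempty open sets and player II picks points in them; player I wins
when `x` is an accumulation point (cluster point) of the resulting sequence. -/
def IsWtildePoint {X : Type*} [TopologicalSpace X] (x : X) : Prop :=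
  ∃ σ : List X → Set X,
    (∀ h : List X, IsOpen (σ h) ∧ (σ h).Nonempty) ∧
    ∀ p : ℕ → X,
      (∀ n : ℕ, p n ∈ σ (List.ofFn fun i : Fin n => p i)) →
      MapClusterPt x atTop p

/-- A set `s` is a separable subspace: it has a countable subset that is dense in `s`. -/
def SeparableSubspace {Y : Type*} [TopologicalSpace Y] (s : Set Y) : Prop :=
  ∃ c : Set Y, c ⊆ s ∧ c.Countable ∧ s ⊆ closure c

/-- A rich family: a family of nonempty closed separable subspaces such that every
separable subspace is contained in some member, and the closure of the union of any
increasing sequence of members is again a member. -/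
def IsRichFamily {Y : Type*} [TopologicalSpace Y] (𝓕 : Set (Set Y)) : Prop :=
  (∀ F ∈ 𝓕, F.Nonempty ∧ IsClosed F ∧ SeparableSubspace F) ∧
  (∀ Z : Set Y, SeparableSubspace Z → ∃ F ∈ 𝓕, Z ⊆ F) ∧
  (∀ F : ℕ → Set Y, (∀ n, F n ∈ 𝓕) → Monotone F → closure (⋃ n, F n) ∈ 𝓕)

/-- `ρ` is a metric on `Z`. -/
def IsMetricOn {Z : Type*} (ρ : Z → Z → ℝ) : Prop :=
  (∀ x y, ρ x y = 0 ↔ x = y) ∧ (∀ x y, ρ x y = ρ y x) ∧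
    ∀ x y z, ρ x z ≤ ρ x y + ρ y z

/-- The topological space `Z` is fragmented by `ρ`: every nonempty subset has a nonempty
relatively open subset of `ρ`-diameter less than any given `ε > 0`. -/
def Fragments {Z : Type*} [TopologicalSpace Z] (ρ : Z → Z → ℝ) : Prop :=
  ∀ ε : ℝ, 0 < ε → ∀ A : Set Z, A.Nonempty →
    ∃ B : Set Z, B.Nonempty ∧ (∃ U : Set Z, IsOpen U ∧ B = A ∩ U) ∧
      ∀ z ∈ B, ∀ w ∈ B, ρ z w < ε

namespace NKaux

variable {X : Type*} [TopologicalSpace X]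

/-- history of α-moves, newest first -/
def hist (A : ℕ → Set X) : ℕ → List (Set X)
  | 0 => []
  | n+1 => A n :: hist A n

/-- legality of a history of α-moves against strategy `t` -/
def LegalT (t : List (Set X) → Set X) : List (Set X) → Prop
  | [] => True
  | A :: l => LegalT t l ∧ IsOpen A ∧ A.Nonempty ∧ A ⊆ t l

theorem oxtoby [BaireSpace X] (t : List (Set X) → Set X)
    (h1 : ∀ l, LegalT t l → IsOpen (t l) ∧ (t l).Nonempty)
    (h2 : ∀ l A, LegalT t (A :: l) → t (A :: l) ⊆ A) :
    ∃ A : ℕ → Set X, (∀ n, LegalT t (hist A (n+1))) ∧ ∃ x, ∀ n, x ∈ A n := by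
  classical
  set nxt : List (Set X) → Set (Set X) :=
    fun l => {A | IsOpen A ∧ A.Nonempty ∧ A ⊆ t l} with hnxt
  have legal_cons : ∀ l A, LegalT t l → A ∈ nxt l → LegalT t (A :: l) := by
    intro l A hl hA; exact ⟨hl, hA.1, hA.2.1, hA.2.2⟩
  have key : ∀ l : List (Set X), ∃ M : Set (Set X), M ⊆ nxt l ∧
      (M.PairwiseDisjoint fun A => t (A :: l)) ∧
      (LegalT t l → ∀ O ∈ nxt l, ∃ A ∈ M, (t (A :: l) ∩ t (O :: l)).Nonempty) := by
    intro l
    have hub : ∀ c ⊆ {S : Set (Set X) | S ⊆ nxt l ∧ S.PairwiseDisjoint fun A => t (A :: l)},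
        IsChain (fun x1 x2 => x1 ⊆ x2) c →
        ∃ ub ∈ {S : Set (Set X) | S ⊆ nxt l ∧ S.PairwiseDisjoint fun A => t (A :: l)},
          ∀ s ∈ c, s ⊆ ub := by
      intro c hc hchain
      refine ⟨⋃₀ c, ⟨?_, ?_⟩, fun s hs => Set.subset_sUnion_of_mem hs⟩
      · exact Set.sUnion_subset fun s hs => (hc hs).1
      · intro a ha b hb hab
        obtain ⟨sa, hsa, hasa⟩ := ha
        obtain ⟨sb, hsb, hbsb⟩ := hb
        rcases hchain.total hsa hsb with h | h
        · exact (hc hsb).2 (h hasa) hbsb hab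
        · exact (hc hsa).2 hasa (h hbsb) hab
    obtain ⟨M, hMP, hMmax⟩ := zorn_subset
      {S : Set (Set X) | S ⊆ nxt l ∧ S.PairwiseDisjoint fun A => t (A :: l)} hub
    refine ⟨M, hMP.1, hMP.2, ?_⟩
    ·
      intro hl O hO
      by_cases hOM : O ∈ M
      · refine ⟨O, hOM, ?_⟩
        have := (h1 (O :: l) (legal_cons l O hl hO)).2
        simpa [Set.inter_self] using this
      · have hsub : insert O M ⊆ nxt l := Set.insert_subset hO hMP.1
        have hpd : ¬ (insert O M).PairwiseDisjoint fun A => t (A :: l) := by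
          intro h
          have heq : insert O M ⊆ M := hMmax ⟨hsub, h⟩ (Set.subset_insert _ _)
          exact hOM (heq (Set.mem_insert _ _))
        rw [Set.pairwiseDisjoint_insert] at hpd
        push_neg at hpd
        obtain ⟨A, hAM, hAne, hnd⟩ := hpd hMP.2
        rw [Set.not_disjoint_iff] at hnd
        obtain ⟨x, hx1, hx2⟩ := hnd
        exact ⟨A, hAM, ⟨x, hx2, hx1⟩⟩
  choose M hM1 hM2 hM3 using key
  let D : ℕ → Set (List (Set X)) := fun k =>
    Nat.rec {([] : List (Set X))} (fun _ Dk => {p | ∃ l ∈ Dk, ∃ A ∈ M l, p = A :: l}) k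
  have hD0 : ∀ p, p ∈ D 0 ↔ p = [] := fun p => Set.mem_singleton_iff
  have hDS : ∀ k p, p ∈ D (k+1) ↔ ∃ l ∈ D k, ∃ A ∈ M l, p = A :: l := fun k p => Iff.rfl
  have hDlegal : ∀ k, ∀ l ∈ D k, LegalT t l := by
    intro k
    induction k with
    | zero =>
      intro l hl
      rw [hD0] at hl; subst hl; trivial
    | succ k ih =>
      intro p hp
      obtain ⟨l, hl, A, hA, rfl⟩ := (hDS k p).1 hp
      exact legal_cons l A (ih l hl) (hM1 l hA)
  have hshrink : ∀ l A, LegalT t l → A ∈ nxt l → t (A :: l) ⊆ t l := by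
    intro l A hl hA
    exact (h2 l A (legal_cons l A hl hA)).trans hA.2.2
  have hdisj : ∀ k, ∀ p ∈ D (k+1), ∀ q ∈ D (k+1), p ≠ q → Disjoint (t p) (t q) := by
    intro k
    induction k with
    | zero =>
      intro p hp q hq hpq
      obtain ⟨l1, hl1, A1, hA1, rfl⟩ := (hDS 0 p).1 hp
      obtain ⟨l2, hl2, A2, hA2, rfl⟩ := (hDS 0 q).1 hq
      rw [hD0] at hl1 hl2; subst hl1; subst hl2
      exact hM2 [] hA1 hA2 (fun h => hpq (by rw [h]))
    | succ k ih =>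
      intro p hp q hq hpq
      obtain ⟨l1, hl1, A1, hA1, rfl⟩ := (hDS (k+1) p).1 hp
      obtain ⟨l2, hl2, A2, hA2, rfl⟩ := (hDS (k+1) q).1 hq
      by_cases hll : l1 = l2
      · subst hll
        exact hM2 l1 hA1 hA2 (fun h => hpq (by rw [h]))
      · have d := ih l1 hl1 l2 hl2 hll
        exact d.mono (hshrink l1 A1 (hDlegal (k+1) l1 hl1) (hM1 l1 hA1))
          (hshrink l2 A2 (hDlegal (k+1) l2 hl2) (hM1 l2 hA2))
  let W : ℕ → Set X := fun k => ⋃ p ∈ D (k+1), t p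
  have hWmem : ∀ k x, x ∈ W k ↔ ∃ p ∈ D (k+1), x ∈ t p := by
    intro k x; simp [W]
  have hWopen : ∀ k, IsOpen (W k) :=
    fun k => isOpen_biUnion fun p hp => (h1 p (hDlegal (k+1) p hp)).1
  have hlegnil : LegalT t ([] : List (Set X)) := trivial
  have ht0 : IsOpen (t []) ∧ (t []).Nonempty := h1 [] hlegnil
  have hWdense : ∀ k, ∀ O : Set X, IsOpen O → (O ∩ t []).Nonempty → (O ∩ W k).Nonempty := by
    intro k
    induction k with
    | zero =>
      intro O hO hOne
      have hO' : (O ∩ t []) ∈ nxt [] := ⟨hO.inter ht0.1, hOne, Set.inter_subset_right⟩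
      obtain ⟨A, hAM, x, hx1, hx2⟩ := hM3 [] hlegnil _ hO'
      have hxO : x ∈ O := (h2 [] _ (legal_cons [] _ hlegnil hO') hx2).1
      refine ⟨x, hxO, (hWmem 0 x).2 ⟨A :: [], (hDS 0 _).2 ⟨[], (hD0 []).2 rfl, A, hAM, rfl⟩, hx1⟩⟩
    | succ k ih =>
      intro O hO hOne
      obtain ⟨x, hxO, hxW⟩ := ih O hO hOne
      obtain ⟨p, hp, hxp⟩ := (hWmem k x).1 hxW
      have hpleg := hDlegal (k+1) p hp
      have hO' : (O ∩ t p) ∈ nxt p :=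
        ⟨hO.inter (h1 p hpleg).1, ⟨x, hxO, hxp⟩, Set.inter_subset_right⟩
      obtain ⟨A, hAM, y, hy1, hy2⟩ := hM3 p hpleg _ hO'
      have hyO : y ∈ O := (h2 p _ (legal_cons p _ hpleg hO') hy2).1
      exact ⟨y, hyO, (hWmem (k+1) y).2 ⟨A :: p, (hDS (k+1) _).2 ⟨p, hp, A, hAM, rfl⟩, hy1⟩⟩
  have hDense : ∀ k, Dense (W k ∪ (closure (t []))ᶜ) := by
    intro k
    rw [dense_iff_inter_open]
    intro U hU hUne
    by_cases hsub : U ⊆ closure (t [])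
    · obtain ⟨x, hx⟩ := hUne
      have hne : (U ∩ t []).Nonempty := by
        have := hsub hx
        rw [mem_closure_iff] at this
        exact this U hU hx
      obtain ⟨y, hy1, hy2⟩ := hWdense k U hU hne
      exact ⟨y, hy1, Or.inl hy2⟩
    · rw [Set.not_subset] at hsub
      obtain ⟨x, hx1, hx2⟩ := hsub
      exact ⟨x, hx1, Or.inr hx2⟩
  have hOpen2 : ∀ k, IsOpen (W k ∪ (closure (t []))ᶜ) :=
    fun k => (hWopen k).union isClosed_closure.isOpen_compl
  have hd : Dense (⋂ k, (W k ∪ (closure (t []))ᶜ)) := dense_iInter_of_isOpen hOpen2 hDense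
  obtain ⟨x, hxt, hxI⟩ := hd.inter_open_nonempty (t []) ht0.1 ht0.2
  have hxW : ∀ k, x ∈ W k := by
    intro k
    rcases Set.mem_iInter.1 hxI k with h | h
    · exact h
    · exact absurd (subset_closure hxt) h
  have step : ∀ k l, LegalT t l → x ∈ t l → l ∈ D k → ∃ A ∈ M l, x ∈ t (A :: l) := by
    intro k l hl hx hlk
    obtain ⟨p, hp, hxp⟩ := (hWmem k x).1 (hxW k)
    obtain ⟨l', hl', A, hA, rfl⟩ := (hDS k p).1 hp
    have hxl' : x ∈ t l' := hshrink l' A (hDlegal k l' hl') (hM1 l' hA) hxp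
    have hll : l' = l := by
      by_contra hne
      cases k with
      | zero =>
        rw [hD0] at hl' hlk
        exact hne (hl'.trans hlk.symm)
      | succ k =>
        exact (hdisj k l' hl' l hlk hne).ne_of_mem hxl' hx rfl
    subst hll
    exact ⟨A, hA, hxp⟩
  let G : ℕ → List (Set X) → Set X := fun k l =>
    @dite _ (LegalT t l ∧ x ∈ t l ∧ l ∈ D k) (Classical.propDecidable _)
      (fun h => (step k l h.1 h.2.1 h.2.2).choose) (fun _ => (∅ : Set X))
  have hG : ∀ k l (h : LegalT t l ∧ x ∈ t l ∧ l ∈ D k),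
      G k l ∈ M l ∧ x ∈ t (G k l :: l) := by
    intro k l h
    have h1' := (step k l h.1 h.2.1 h.2.2).choose_spec
    simp only [G, dif_pos h]
    exact ⟨h1'.1, h1'.2⟩
  let L : ℕ → List (Set X) := fun k => Nat.rec [] (fun k Lk => G k Lk :: Lk) k
  have hLs : ∀ k, L (k+1) = G k (L k) :: L k := fun _ => rfl
  have hLinv : ∀ k, LegalT t (L k) ∧ x ∈ t (L k) ∧ L k ∈ D k := by
    intro k
    induction k with
    | zero => exact ⟨trivial, hxt, (hD0 []).2 rfl⟩
    | succ k ih =>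
      obtain ⟨hGM, hGx⟩ := hG k (L k) ih
      refine ⟨legal_cons _ _ ih.1 (hM1 _ hGM), hGx, ?_⟩
      exact (hDS k _).2 ⟨L k, ih.2.2, G k (L k), hGM, rfl⟩
  refine ⟨fun k => G k (L k), ?_, x, ?_⟩
  · intro n
    have hh : hist (fun k => G k (L k)) (n+1) = L (n+1) := by
      induction n with
      | zero => rfl
      | succ n ih =>
        show G (n+1) (L (n+1)) :: hist (fun k => G k (L k)) (n+1) = L (n+2)
        rw [ih, hLs]
    rw [hh]
    exact (hLinv (n+1)).1
  · intro n
    have hx1 := (hLinv (n+1)).2.1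
    rw [hLs] at hx1
    exact h2 _ _ ((hLs n) ▸ (hLinv (n+1)).1) hx1




-- generic recursion helpers
variable {X Y : Type*}

/-- y-moves accumulated along an X-history (oldest first). -/
def ysFn (ch : Set X → List Y → Y) : List (Set X) → List Y
  | [] => []
  | A :: l => ysFn ch l ++ [ch A (ysFn ch l)]

/-- strategy for the quasicontinuity argument -/
noncomputable def tqFn (U₀ : Set X) (ch : Set X → List Y → Y) (cond : Set X → List Y → Prop)
    (Bad : Set X → Y → Set X) : List (Set X) → Set X
  | [] => U₀
  | A :: l => @ite _ (cond A (ysFn ch l)) (Classical.propDecidable _) (Bad A (ch A (ysFn ch l))) A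

/-- iterated play of a point-valued step function (oldest first). -/
def plFn (step : List Y → Y) : ℕ → List Y
  | 0 => []
  | n+1 => plFn step n ++ [step (plFn step n)]



section Quasi
variable {X Y Z : Type*} [TopologicalSpace X] [TopologicalSpace Y] [TopologicalSpace Z]

theorem quasicont [BaireSpace X] [RegularSpace Z] (f : X × Y → Z)
    (hf₁ : ∀ x : X, Continuous fun y : Y => f (x, y))
    (hf₂ : ∀ y : Y, Continuous fun x : X => f (x, y))
    (hY : ∀ y : Y, IsWtildePoint y)
    (x₀ : X) (y₀ : Y) (W : Set Z) (hW : IsOpen W) (hfW : f (x₀, y₀) ∈ W)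
    (U : Set X) (V : Set Y) (hU : IsOpen U) (hV : IsOpen V) (hxU : x₀ ∈ U) (hyV : y₀ ∈ V) :
    ∃ U' V', IsOpen U' ∧ U'.Nonempty ∧ U' ⊆ U ∧ IsOpen V' ∧ V'.Nonempty ∧ V' ⊆ V ∧
      ∀ x ∈ U', ∀ y ∈ V', f (x, y) ∈ W := by
  classical
  -- regularity: W₁ open with closure inside W
  obtain ⟨Wc, hWc_nhds, hWc_closed, hWcW⟩ :=
    exists_mem_nhds_isClosed_subset (hW.mem_nhds hfW)
  set W₁ : Set Z := interior Wc with hW₁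
  have hW₁open : IsOpen W₁ := isOpen_interior
  have hfW₁ : f (x₀, y₀) ∈ W₁ := mem_interior_iff_mem_nhds.2 hWc_nhds
  have hclW₁ : closure W₁ ⊆ W :=
    (closure_minimal interior_subset hWc_closed).trans hWcW
  set U₀ : Set X := U ∩ ((fun x => f (x, y₀)) ⁻¹' W₁) with hU₀
  have hU₀open : IsOpen U₀ := hU.inter (hW₁open.preimage (hf₂ y₀))
  have hx₀U₀ : x₀ ∈ U₀ := ⟨hxU, hfW₁⟩
  by_contra hcon
  push_neg at hcon
  have dagger : ∀ U', IsOpen U' → U'.Nonempty → U' ⊆ U₀ →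
      ∀ V', IsOpen V' → V'.Nonempty → V' ⊆ V →
      ∃ x ∈ U', ∃ y ∈ V', f (x, y) ∉ W := by
    intro U' hU'o hU'ne hU'sub V' hV'o hV'ne hV'sub
    by_contra h'
    push_neg at h'
    obtain ⟨x, hx, y, hy, hfxy⟩ := hcon U' V' hU'o hU'ne (hU'sub.trans Set.inter_subset_left)
      hV'o hV'ne hV'sub
    exact hfxy (h' x hx y hy)
  -- the W̃ strategy at y₀
  set σT : List Y → Set Y := (hY y₀).choose with hσT
  have hσprop := (hY y₀).choose_spec
  have hσo : ∀ h : List Y, IsOpen (σT h) ∧ (σT h).Nonempty := hσprop.1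
  have hσw : ∀ p : ℕ → Y, (∀ n, p n ∈ σT (List.ofFn fun i : Fin n => p i)) →
      MapClusterPt y₀ atTop p := hσprop.2
  -- choice of player II moves
  set cond : Set X → List Y → Prop :=
    fun A prev => ∃ y ∈ σT prev, ∃ x ∈ A, f (x, y) ∉ closure W₁ with hcond
  set ch : Set X → List Y → Y := fun A prev =>
    @dite _ (cond A prev) (Classical.propDecidable _) (fun h => h.choose)
      (fun _ => (hσo prev).2.choose) with hch
  have hch_mem : ∀ A prev, ch A prev ∈ σT prev := by
    intro A prev
    by_cases h : cond A prev
    · simp only [ch, dif_pos h]; exact h.choose_spec.1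
    · simp only [ch, dif_neg h]; exact (hσo prev).2.choose_spec
  have hch_bad : ∀ A prev, cond A prev → ∃ x ∈ A, f (x, ch A prev) ∉ closure W₁ := by
    intro A prev h
    simp only [ch, dif_pos h]
    exact h.choose_spec.2
  set Bad : Set X → Y → Set X := fun A y => A ∩ ((fun x => f (x, y)) ⁻¹' (closure W₁)ᶜ)
    with hBad
  set t : List (Set X) → Set X := tqFn U₀ ch cond Bad with ht
  have ht_nil : t [] = U₀ := rfl
  have ht_cons : ∀ A l, t (A :: l) =
      @ite _ (cond A (ysFn ch l)) (Classical.propDecidable _) (Bad A (ch A (ysFn ch l))) A :=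
    fun A l => rfl
  have ht_sub : ∀ l A, t (A :: l) ⊆ A := by
    intro l A
    rw [ht_cons]
    by_cases h : cond A (ysFn ch l)
    · rw [if_pos h]; exact Set.inter_subset_left
    · rw [if_neg h]
  have h1 : ∀ l, LegalT t l → IsOpen (t l) ∧ (t l).Nonempty := by
    intro l hl
    match l with
    | [] => exact ⟨hU₀open, ⟨x₀, hx₀U₀⟩⟩
    | A :: l' =>
      obtain ⟨hl', hAo, hAne, hAsub⟩ := hl
      rw [ht_cons]
      by_cases h : cond A (ysFn ch l')
      · rw [if_pos h]
        constructor
        · exact hAo.inter ((isClosed_closure.isOpen_compl).preimage (hf₂ _))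
        · obtain ⟨x, hx, hfx⟩ := hch_bad A (ysFn ch l') h
          exact ⟨x, hx, hfx⟩
      · rw [if_neg h]; exact ⟨hAo, hAne⟩
  have h2' : ∀ l A, LegalT t (A :: l) → t (A :: l) ⊆ A := fun l A _ => ht_sub l A
  obtain ⟨A, hleg, xstar, hxstar⟩ := oxtoby t h1 h2'
  -- the y-play
  set p : ℕ → Y := fun m => ch (A m) (ysFn ch (hist A m)) with hp
  have hys : ∀ m, ysFn ch (hist A m) = List.ofFn (fun i : Fin m => p i) := by
    intro m
    induction m with
    | zero => rfl
    | succ m ih =>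
      show ysFn ch (A m :: hist A m) = _
      rw [List.ofFn_succ']
      show ysFn ch (hist A m) ++ [ch (A m) (ysFn ch (hist A m))] = _
      rw [ih, List.concat_eq_append]
      simp only [Fin.coe_castSucc, Fin.val_last]
      rw [← ih]
  have hplegal : ∀ m, p m ∈ σT (List.ofFn fun i : Fin m => p i) := by
    intro m
    rw [← hys m]
    exact hch_mem (A m) _
  have hcluster : MapClusterPt y₀ atTop p := hσw p hplegal
  -- facts about the limit point
  have hAsub : ∀ n, A n ⊆ t (hist A n) := fun n => (hleg n).2.2.2
  have hAopen : ∀ n, IsOpen (A n) := fun n => (hleg n).2.1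
  have hAne : ∀ n, (A n).Nonempty := fun n => (hleg n).2.2.1
  have htU₀ : ∀ n, t (hist A n) ⊆ U₀ := by
    intro n
    induction n with
    | zero =>
      show t [] ⊆ U₀
      rw [ht_nil]
    | succ n ih =>
      show t (A n :: hist A n) ⊆ U₀
      exact (ht_sub _ _).trans ((hAsub n).trans ih)
  have hxstarU₀ : xstar ∈ U₀ := htU₀ 0 (hAsub 0 (hxstar 0))
  have hN : ({y | f (xstar, y) ∈ W₁} ∩ V) ∈ 𝓝 y₀ := by
    refine IsOpen.mem_nhds ?_ ?_
    · exact (hW₁open.preimage (hf₁ xstar)).inter hV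
    · exact ⟨hxstarU₀.2, hyV⟩
  have hfreq : ∃ m, p m ∈ ({y | f (xstar, y) ∈ W₁} ∩ V) := by
    have := (mapClusterPt_iff_frequently.mp hcluster) _ hN
    exact this.exists
  obtain ⟨m, hpm1, hpm2⟩ := hfreq
  -- at round m the good case must have held
  have hcondm : cond (A m) (ysFn ch (hist A m)) := by
    by_contra hnc
    have hnc' : ∀ y ∈ σT (ysFn ch (hist A m)), ∀ x ∈ A m, f (x, y) ∈ closure W₁ := by
      intro y hy x hx
      by_contra hcc
      exact hnc ⟨y, hy, x, hx, hcc⟩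
    have hpmσ : p m ∈ σT (ysFn ch (hist A m)) := hch_mem (A m) _
    have hAmU₀ : A m ⊆ U₀ := (hAsub m).trans (htU₀ m)
    obtain ⟨x, hx, y, hy, hfxy⟩ := dagger (A m) (hAopen m) (hAne m) hAmU₀
      (σT (ysFn ch (hist A m)) ∩ V) ((hσo _).1.inter hV) ⟨p m, hpmσ, hpm2⟩
      Set.inter_subset_right
    exact hfxy (hclW₁ (hnc' y hy.1 x hx))
  have hxstarbad : f (xstar, p m) ∉ closure W₁ := by
    have hx1 : xstar ∈ t (A m :: hist A m) := hAsub (m+1) (hxstar (m+1))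
    rw [ht_cons, if_pos hcondm] at hx1
    exact hx1.2
  exact hxstarbad (subset_closure hpm1)

end Quasi

section SmallBox
variable {X Y Z : Type*} [TopologicalSpace X] [TopologicalSpace Y] [TopologicalSpace Z]

theorem smallbox_exists [BaireSpace X] [RegularSpace Z] (f : X × Y → Z)
    (hf₁ : ∀ x : X, Continuous fun y : Y => f (x, y))
    (hf₂ : ∀ y : Y, Continuous fun x : X => f (x, y))
    (hY : ∀ y : Y, IsWtildePoint y)
    (ρ : Z → Z → ℝ) (hfrag : Fragments ρ)
    (G₁ : Set X) (G₂ : Set Y) (hG₁ : IsOpen G₁) (hG₂ : IsOpen G₂)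
    (hG₁ne : G₁.Nonempty) (hG₂ne : G₂.Nonempty) (ε : ℝ) (hε : 0 < ε) :
    ∃ U' V', IsOpen U' ∧ U'.Nonempty ∧ U' ⊆ G₁ ∧ IsOpen V' ∧ V'.Nonempty ∧ V' ⊆ G₂ ∧
      ∀ x ∈ U', ∀ y ∈ V', ∀ x' ∈ U', ∀ y' ∈ V', ρ (f (x, y)) (f (x', y')) < ε := by
  classical
  set A : Set Z := f '' (G₁ ×ˢ G₂) with hA
  have hAne : A.Nonempty := by
    obtain ⟨x, hx⟩ := hG₁ne
    obtain ⟨y, hy⟩ := hG₂ne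
    exact ⟨f (x, y), ⟨(x, y), ⟨hx, hy⟩, rfl⟩⟩
  obtain ⟨B, hBne, ⟨GZ, hGZopen, hBeq⟩, hBsmall⟩ := hfrag ε hε A hAne
  obtain ⟨b, hbB⟩ := hBne
  have hbA : b ∈ A := by rw [hBeq] at hbB; exact hbB.1
  have hbGZ : b ∈ GZ := by rw [hBeq] at hbB; exact hbB.2
  obtain ⟨⟨x₁, y₁⟩, hpmem, hfp⟩ := hbA
  obtain ⟨U', V', hU'o, hU'ne, hU'sub, hV'o, hV'ne, hV'sub, hval⟩ :=
    quasicont f hf₁ hf₂ hY x₁ y₁ GZ hGZopen (by rw [hfp]; exact hbGZ)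
      G₁ G₂ hG₁ hG₂ hpmem.1 hpmem.2
  refine ⟨U', V', hU'o, hU'ne, hU'sub, hV'o, hV'ne, hV'sub, ?_⟩
  intro x hx y hy x' hx' y' hy'
  have h1 : f (x, y) ∈ B := by
    rw [hBeq]
    exact ⟨⟨(x, y), ⟨hU'sub hx, hV'sub hy⟩, rfl⟩, hval x hx y hy⟩
  have h2 : f (x', y') ∈ B := by
    rw [hBeq]
    exact ⟨⟨(x', y'), ⟨hU'sub hx', hV'sub hy'⟩, rfl⟩, hval x' hx' y' hy'⟩
  exact hBsmall _ h1 _ h2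

end SmallBox

section Wrel
variable {Y : Type*} [TopologicalSpace Y]

theorem wrel (σT : Y → List Y → Set Y)
    (hσo : ∀ q h, IsOpen (σT q h) ∧ (σT q h).Nonempty)
    (hσw : ∀ q (p : ℕ → Y), (∀ n, p n ∈ σT q (List.ofFn fun i : Fin n => p i)) →
      MapClusterPt q atTop p)
    (Q S : Set Y) (hQS : Q ⊆ S)
    (hQd : ∀ O : Set Y, IsOpen O → (O ∩ S).Nonempty → (O ∩ Q).Nonempty)
    (O : Set Y) (hO : IsOpen O) (q : Y) (hq : q ∈ Q) (hqO : q ∈ O) :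
    ∃ h : List Y, (∀ y ∈ h, y ∈ Q) ∧
      ∀ R : Set Y, IsOpen R → (R ∩ σT q h ∩ S).Nonempty → (R ∩ σT q h ∩ O ∩ S).Nonempty := by
  classical
  by_contra hbad
  push_neg at hbad
  -- from failure at a Q-valued history, extract a Q-point of the strategy set outside O
  have hstep : ∀ h : List Y, (∀ y ∈ h, y ∈ Q) →
      ∃ w, w ∈ σT q h ∧ w ∈ Q ∧ w ∉ O := by
    intro h hhQ
    obtain ⟨R, hRo, hRne, hRempty⟩ := hbad h hhQ
    have hRso : IsOpen (R ∩ σT q h) := hRo.inter (hσo q h).1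
    have : ((R ∩ σT q h) ∩ S).Nonempty := by
      obtain ⟨w, hw⟩ := hRne
      exact ⟨w, ⟨hw.1.1, hw.1.2⟩, hw.2⟩
    obtain ⟨w, hw1, hw2⟩ := hQd _ hRso this
    refine ⟨w, hw1.2, hw2, ?_⟩
    intro hwO
    have hmem : w ∈ R ∩ σT q h ∩ O ∩ S := ⟨⟨⟨hw1.1, hw1.2⟩, hwO⟩, hQS hw2⟩
    rw [hRempty] at hmem
    exact hmem
  set step : List Y → Y := fun h =>
    @dite _ (∀ y ∈ h, y ∈ Q) (Classical.propDecidable _)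
      (fun hh => (hstep h hh).choose) (fun _ => q) with hstepdef
  set pl : ℕ → List Y := fun n => plFn step n with hpl
  have hpl0 : pl 0 = [] := rfl
  have hplS : ∀ n, pl (n+1) = pl n ++ [step (pl n)] := fun n => rfl
  have hinv : ∀ n, (∀ y ∈ pl n, y ∈ Q) := by
    intro n
    induction n with
    | zero => intro y hy; simp [hpl0] at hy
    | succ n ih =>
      intro y hy
      rw [hplS, List.mem_append] at hy
      rcases hy with hy | hy
      · exact ih y hy
      · simp at hy
        subst hy
        simp only [step, dif_pos ih]
        exact (hstep (pl n) ih).choose_spec.2.1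
  set p : ℕ → Y := fun n => step (pl n) with hpdef
  have hpprop : ∀ n, p n ∈ σT q (pl n) ∧ p n ∈ Q ∧ p n ∉ O := by
    intro n
    have ih := hinv n
    simp only [hpdef, step, dif_pos ih]
    exact (hstep (pl n) ih).choose_spec
  have hplofn : ∀ n, pl n = List.ofFn (fun i : Fin n => p i) := by
    intro n
    induction n with
    | zero => rfl
    | succ n ih =>
      have h1 : pl (n+1) = pl n ++ [p n] := rfl
      rw [h1, ih, List.ofFn_succ', List.concat_eq_append]
      simp only [Fin.coe_castSucc, Fin.val_last]
  have hcluster : MapClusterPt q atTop p := by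
    apply hσw q p
    intro n
    rw [← hplofn n]
    exact (hpprop n).1
  have := (mapClusterPt_iff_frequently.mp hcluster) O (hO.mem_nhds hqO)
  obtain ⟨n, hn⟩ := this.exists
  exact (hpprop n).2.2 hn

end Wrel

section MainDefs
variable {X Y : Type*}

def mixFn (e d : ℕ → Y) (a b : Y) : ℕ → Y := fun k =>
  if k % 4 = 0 then e (k / 4) else if k % 4 = 1 then d (k / 4) else if k % 4 = 2 then a else b

theorem mixFn_e (e d : ℕ → Y) (a b : Y) (j : ℕ) : mixFn e d a b (4 * j) = e j := by
  have h1 : 4 * j % 4 = 0 := by omega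
  have h2 : 4 * j / 4 = j := by omega
  simp [mixFn, h1, h2]

theorem mixFn_d (e d : ℕ → Y) (a b : Y) (j : ℕ) : mixFn e d a b (4 * j + 1) = d j := by
  have h1 : (4 * j + 1) % 4 = 1 := by omega
  have h0 : ¬ ((4 * j + 1) % 4 = 0) := by omega
  have h2 : (4 * j + 1) / 4 = j := by omega
  simp [mixFn, h0, h1, h2]

theorem mixFn_a (e d : ℕ → Y) (a b : Y) : mixFn e d a b 2 = a := by
  simp [mixFn]

theorem mixFn_b (e d : ℕ → Y) (a b : Y) : mixFn e d a b 3 = b := by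
  simp [mixFn]

theorem mixFn_range (e d : ℕ → Y) (a b : Y) :
    Set.range (mixFn e d a b) ⊆ Set.range e ∪ Set.range d ∪ {a, b} := by
  rintro y ⟨k, hk⟩
  have h4 : k % 4 = 0 ∨ k % 4 = 1 ∨ k % 4 = 2 ∨ k % 4 = 3 := by omega
  rcases h4 with h | h | h | h
  · left; left; exact ⟨k / 4, by simpa [mixFn, h] using hk⟩
  · left; right; exact ⟨k / 4, by simpa [mixFn, h] using hk⟩
  · right; left; simpa [mixFn, h] using hk.symm
  · right; right
    have : y = b := by simpa [mixFn, h] using hk.symm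
    simp [this]

theorem getD_append_last {α : Type*} (L : List α) (x d : α) :
    (L ++ [x]).getD L.length d = x := by
  induction L with
  | nil => rfl
  | cons a L ih =>
    show ((a :: (L ++ [x]))).getD (L.length + 1) d = x
    rw [List.getD_cons_succ]
    exact ih

variable (σT : Y → List Y → Set Y) (sbox : Set X → Set Y → ℕ → Set X × Set Y)
  (yptF : Set Y → Y) (FupF : Set Y → Set Y) (dnsF : Set Y → ℕ → Y)
  (e₀ : ℕ → Y) (F₀ : Set Y) (dec : ℕ → ℕ × ℕ × List ℕ)

noncomputable def StFn : List (Set X) → List (ℕ → Y) × Set Y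
  | [] => ([e₀], F₀)
  | A :: l =>
      let prev := StFn l
      let c := dec (Nat.unpair l.length).2
      let es := prev.1.getD (Nat.unpair l.length).1 e₀
      let P := σT (es c.2.1) (c.2.2.map es)
      let bx := sbox A P c.1
      let Fn := FupF (prev.2 ∪ {yptF bx.2, yptF P})
      (prev.1 ++ [mixFn (prev.1.getD l.length e₀) (dnsF Fn) (yptF bx.2) (yptF P)], Fn)

noncomputable def PAt (l : List (Set X)) : Set Y :=
  let prev := StFn σT sbox yptF FupF dnsF e₀ F₀ dec l
  let c := dec (Nat.unpair l.length).2
  let es := prev.1.getD (Nat.unpair l.length).1 e₀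
  σT (es c.2.1) (c.2.2.map es)

noncomputable def Vhat (A : Set X) (l : List (Set X)) : Set Y :=
  (sbox A (PAt σT sbox yptF FupF dnsF e₀ F₀ dec l) (dec (Nat.unpair l.length).2).1).2

noncomputable def Fnext (A : Set X) (l : List (Set X)) : Set Y :=
  FupF ((StFn σT sbox yptF FupF dnsF e₀ F₀ dec l).2 ∪
    {yptF (Vhat σT sbox yptF FupF dnsF e₀ F₀ dec A l),
     yptF (PAt σT sbox yptF FupF dnsF e₀ F₀ dec l)})

noncomputable def tMainFn (u : Set X) : List (Set X) → Set X
  | [] => u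
  | A :: l => (sbox A (PAt σT sbox yptF FupF dnsF e₀ F₀ dec l)
      (dec (Nat.unpair l.length).2).1).1

theorem StFn_nil : StFn (X := X) σT sbox yptF FupF dnsF e₀ F₀ dec [] = ([e₀], F₀) := rfl

theorem StFn_cons (A : Set X) (l : List (Set X)) :
    StFn σT sbox yptF FupF dnsF e₀ F₀ dec (A :: l) =
      ((StFn σT sbox yptF FupF dnsF e₀ F₀ dec l).1 ++
        [mixFn ((StFn σT sbox yptF FupF dnsF e₀ F₀ dec l).1.getD l.length e₀)
          (dnsF (Fnext σT sbox yptF FupF dnsF e₀ F₀ dec A l))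
          (yptF (Vhat σT sbox yptF FupF dnsF e₀ F₀ dec A l))
          (yptF (PAt σT sbox yptF FupF dnsF e₀ F₀ dec l))],
       Fnext σT sbox yptF FupF dnsF e₀ F₀ dec A l) := rfl

theorem tMainFn_nil (u : Set X) : tMainFn σT sbox yptF FupF dnsF e₀ F₀ dec u [] = u := rfl

theorem tMainFn_cons (u : Set X) (A : Set X) (l : List (Set X)) :
    tMainFn σT sbox yptF FupF dnsF e₀ F₀ dec u (A :: l) =
      (sbox A (PAt σT sbox yptF FupF dnsF e₀ F₀ dec l) (dec (Nat.unpair l.length).2).1).1 := rfl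

theorem PAt_def (l : List (Set X)) :
    PAt σT sbox yptF FupF dnsF e₀ F₀ dec l =
      σT (((StFn σT sbox yptF FupF dnsF e₀ F₀ dec l).1.getD (Nat.unpair l.length).1 e₀)
            ((dec (Nat.unpair l.length).2).2.1))
        ((dec (Nat.unpair l.length).2).2.2.map
          ((StFn σT sbox yptF FupF dnsF e₀ F₀ dec l).1.getD (Nat.unpair l.length).1 e₀)) := rfl

end MainDefs


end NKaux

open NKaux in
/-- If `f : X × Y → Z` is separately continuous, `X` is Baire, `Y` is a W̃-space with a
rich family of Baire subspaces and `Z` is regular and fragmented by a metric whose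
topology contains the topology of `Z`, then `f` is continuous at the points of a dense
Gδ subset of `X × Y`. -/
theorem continuity_on_dense_Gdelta {X Y Z : Type*} [TopologicalSpace X]
    [TopologicalSpace Y] [TopologicalSpace Z] [BaireSpace X] [RegularSpace Z]
    (f : X × Y → Z)
    (hf₁ : ∀ x : X, Continuous fun y : Y => f (x, y))
    (hf₂ : ∀ y : Y, Continuous fun x : X => f (x, y))
    (hY : ∀ y : Y, IsWtildePoint y)
    (𝓕 : Set (Set Y)) (h𝓕 : IsRichFamily 𝓕) (hBaire : ∀ F ∈ 𝓕, BaireSpace F)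
    (ρ : Z → Z → ℝ) (hρ : IsMetricOn ρ) (hfrag : Fragments ρ)
    (hρtop : ∀ V : Set Z, IsOpen V → ∀ z ∈ V, ∃ ε : ℝ, 0 < ε ∧ {w : Z | ρ z w < ε} ⊆ V) :
    ∃ C : Set (X × Y), Dense C ∧ IsGδ C ∧ ∀ p ∈ C, ContinuousAt f p := by
  classical
  rcases isEmpty_or_nonempty (X × Y) with hEm | hNE
  · exact ⟨Set.univ, dense_univ, IsGδ.univ, fun p _ => (hEm.false p).elim⟩
  haveI hXne : Nonempty X := ⟨hNE.some.1⟩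
  haveI hYne : Nonempty Y := ⟨hNE.some.2⟩
  -- the sets of points with small oscillation
  set E : ℕ → Set (X × Y) := fun n => {p | ∃ O : Set (X × Y), IsOpen O ∧ p ∈ O ∧
    ∀ a ∈ O, ∀ b ∈ O, ρ (f a) (f b) < 1 / (n + 1)} with hE
  have hEopen : ∀ n, IsOpen (E n) := by
    intro n
    rw [isOpen_iff_forall_mem_open]
    rintro p ⟨O, hOo, hpO, hOs⟩
    exact ⟨O, fun q hq => ⟨O, hOo, hq, hOs⟩, hOo, hpO⟩
  refine ⟨⋂ n, E n, ?_, IsGδ.iInter (fun n => (hEopen n).isGδ), ?_⟩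
  swap
  · -- continuity at points of the intersection
    intro p hp
    rw [continuousAt_def]
    intro W hW
    obtain ⟨W', hW'sub, hW'open, hfpW'⟩ := mem_nhds_iff.1 hW
    obtain ⟨ε, hε, hball⟩ := hρtop W' hW'open (f p) hfpW'
    obtain ⟨n, hn⟩ := exists_nat_one_div_lt hε
    obtain ⟨O, hOo, hpO, hOs⟩ := Set.mem_iInter.1 hp n
    refine Filter.mem_of_superset (hOo.mem_nhds hpO) ?_
    intro a ha
    have : ρ (f p) (f a) < 1 / (n + 1) := hOs p hpO a ha
    exact hW'sub (hball (lt_trans this hn))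
  -- density
  rw [dense_iff_inter_open]
  intro G hG hGne
  obtain ⟨⟨x₁, y₁⟩, hpG⟩ := hGne
  obtain ⟨u, v, huo, hvo, hx₁u, hy₁v, huv⟩ := isOpen_prod_iff.1 hG x₁ y₁ hpG
  -- choice data for the Y side
  set σT : Y → List Y → Set Y := fun q => (hY q).choose with hσTdef
  have hσo : ∀ q (h : List Y), IsOpen (σT q h) ∧ (σT q h).Nonempty :=
    fun q => (hY q).choose_spec.1
  have hσw : ∀ q (p : ℕ → Y), (∀ n, p n ∈ σT q (List.ofFn fun i : Fin n => p i)) →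
      MapClusterPt q atTop p := fun q => (hY q).choose_spec.2
  set yptF : Set Y → Y := fun s =>
    @dite _ s.Nonempty (Classical.propDecidable _) (fun h => h.choose)
      (fun _ => hYne.some) with hyptdef
  have hypt : ∀ s : Set Y, s.Nonempty → yptF s ∈ s := by
    intro s h
    simp only [hyptdef, dif_pos h]
    exact h.choose_spec
  -- separable union lemma
  have hsepU : ∀ F : Set Y, F ∈ 𝓕 → ∀ c : Set Y, c.Countable → SeparableSubspace (F ∪ c) := by
    intro F hF c hc
    obtain ⟨d, hdF, hdc, hFd⟩ := (h𝓕.1 F hF).2.2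
    refine ⟨d ∪ c, Set.union_subset_union hdF subset_rfl, hdc.union hc, ?_⟩
    intro y hy
    rcases hy with hy | hy
    · exact closure_mono Set.subset_union_left (hFd hy)
    · exact subset_closure (Or.inr hy)
  have hsep_empty : SeparableSubspace (∅ : Set Y) :=
    ⟨∅, subset_rfl, Set.countable_empty, by simp⟩
  set FupF : Set Y → Set Y := fun s =>
    @dite _ (SeparableSubspace s) (Classical.propDecidable _)
      (fun h => (h𝓕.2.1 s h).choose) (fun _ => (h𝓕.2.1 ∅ hsep_empty).choose) with hFupdef
  have hFup : ∀ s : Set Y, SeparableSubspace s → FupF s ∈ 𝓕 ∧ s ⊆ FupF s := by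
    intro s h
    simp only [hFupdef, dif_pos h]
    exact ⟨(h𝓕.2.1 s h).choose_spec.1, (h𝓕.2.1 s h).choose_spec.2⟩
  set dnsF : Set Y → ℕ → Y := fun F =>
    @dite _ (∃ g : ℕ → Y, Set.range g ⊆ F ∧ F ⊆ closure (Set.range g))
      (Classical.propDecidable _) (fun h => h.choose) (fun _ => fun _ => hYne.some)
    with hdnsdef
  have hdns : ∀ F : Set Y, F ∈ 𝓕 →
      Set.range (dnsF F) ⊆ F ∧ F ⊆ closure (Set.range (dnsF F)) := by
    intro F hF
    have hex : ∃ g : ℕ → Y, Set.range g ⊆ F ∧ F ⊆ closure (Set.range g) := by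
      obtain ⟨hFne, _, d, hdF, hdc, hFd⟩ := h𝓕.1 F hF
      have hdne : d.Nonempty := by
        rcases Set.eq_empty_or_nonempty d with h | h
        · exfalso
          rw [h] at hFd
          simp only [closure_empty, Set.subset_empty_iff] at hFd
          obtain ⟨y, hy⟩ := hFne
          rw [hFd] at hy
          exact hy
        · exact h
      obtain ⟨g, hg⟩ := hdc.exists_eq_range hdne
      exact ⟨g, by rw [← hg]; exact hdF, by rw [← hg]; exact hFd⟩
    simp only [hdnsdef, dif_pos hex]
    exact hex.choose_spec
  -- small box choice function
  have hsbE : ∀ (A : Set X) (P : Set Y) (n : ℕ),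
      IsOpen A → A.Nonempty → IsOpen P → P.Nonempty →
      ∃ bx : Set X × Set Y, IsOpen bx.1 ∧ bx.1.Nonempty ∧ bx.1 ⊆ A ∧
        IsOpen bx.2 ∧ bx.2.Nonempty ∧ bx.2 ⊆ P ∧
        ∀ x ∈ bx.1, ∀ y ∈ bx.2, ∀ x' ∈ bx.1, ∀ y' ∈ bx.2,
          ρ (f (x, y)) (f (x', y')) < 1 / (n + 1) := by
    intro A P n hA hAne hP hPne
    obtain ⟨U', V', h1, h2, h3, h4, h5, h6, h7⟩ :=
      smallbox_exists f hf₁ hf₂ hY ρ hfrag A P hA hP hAne hPne (1 / (n + 1)) (by positivity)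
    exact ⟨(U', V'), h1, h2, h3, h4, h5, h6, h7⟩
  set sbox : Set X → Set Y → ℕ → Set X × Set Y := fun A P n =>
    @dite _ (IsOpen A ∧ A.Nonempty ∧ IsOpen P ∧ P.Nonempty) (Classical.propDecidable _)
      (fun h => (hsbE A P n h.1 h.2.1 h.2.2.1 h.2.2.2).choose) (fun _ => (A, P))
    with hsboxdef
  have hsbox : ∀ (A : Set X) (P : Set Y) (n : ℕ),
      IsOpen A → A.Nonempty → IsOpen P → P.Nonempty →
      IsOpen (sbox A P n).1 ∧ (sbox A P n).1.Nonempty ∧ (sbox A P n).1 ⊆ A ∧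
        IsOpen (sbox A P n).2 ∧ (sbox A P n).2.Nonempty ∧ (sbox A P n).2 ⊆ P ∧
        ∀ x ∈ (sbox A P n).1, ∀ y ∈ (sbox A P n).2, ∀ x' ∈ (sbox A P n).1,
          ∀ y' ∈ (sbox A P n).2, ρ (f (x, y)) (f (x', y')) < 1 / (n + 1) := by
    intro A P n hA hAne hP hPne
    have h : IsOpen A ∧ A.Nonempty ∧ IsOpen P ∧ P.Nonempty := ⟨hA, hAne, hP, hPne⟩
    simp only [hsboxdef, dif_pos h]
    exact (hsbE A P n h.1 h.2.1 h.2.2.1 h.2.2.2).choose_spec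
  have hsb_sub1 : ∀ (A : Set X) (P : Set Y) (n : ℕ), (sbox A P n).1 ⊆ A := by
    intro A P n
    by_cases h : IsOpen A ∧ A.Nonempty ∧ IsOpen P ∧ P.Nonempty
    · exact (hsbox A P n h.1 h.2.1 h.2.2.1 h.2.2.2).2.2.1
    · simp only [hsboxdef, dif_neg h]
      exact subset_rfl
  -- the base member and enumeration
  have hsepy₁ : SeparableSubspace ({y₁} : Set Y) :=
    ⟨{y₁}, subset_rfl, Set.countable_singleton y₁, subset_closure⟩
  set F₀ : Set Y := FupF {y₁} with hF₀def
  have hF₀mem : F₀ ∈ 𝓕 := (hFup _ hsepy₁).1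
  have hy₁F₀ : y₁ ∈ F₀ := (hFup _ hsepy₁).2 (Set.mem_singleton y₁)
  set e₀ : ℕ → Y := mixFn (fun _ => y₁) (dnsF F₀) y₁ y₁ with he₀def
  have he₀range : Set.range e₀ ⊆ F₀ := by
    refine (mixFn_range _ _ _ _).trans ?_
    intro y hy
    rcases hy with (hy | hy) | hy
    · obtain ⟨j, hj⟩ := hy; rw [← hj]; exact hy₁F₀
    · exact (hdns F₀ hF₀mem).1 hy
    · rcases hy with hy | hy
      · rw [hy]; exact hy₁F₀
      · rw [hy]; exact hy₁F₀
  have hdnsF₀sub : Set.range (dnsF F₀) ⊆ Set.range e₀ := by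
    rintro y ⟨j, hj⟩
    exact ⟨4 * j + 1, by rw [he₀def, mixFn_d]; exact hj⟩
  set dec : ℕ → ℕ × ℕ × List ℕ := fun c =>
    (Encodable.decode (α := ℕ × ℕ × List ℕ) c).getD (0, 0, []) with hdecdef
  have hdec : ∀ a : ℕ × ℕ × List ℕ, dec (Encodable.encode a) = a := by
    intro a
    show (Encodable.decode (α := ℕ × ℕ × List ℕ) (Encodable.encode a)).getD (0, 0, []) = a
    rw [Encodable.encodek]
    rfl
  -- abbreviations
  set St : List (Set X) → List (ℕ → Y) × Set Y := StFn σT sbox yptF FupF dnsF e₀ F₀ dec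
    with hStdef
  set tM : List (Set X) → Set X := tMainFn σT sbox yptF FupF dnsF e₀ F₀ dec u with htMdef
  set PA : List (Set X) → Set Y := PAt σT sbox yptF FupF dnsF e₀ F₀ dec with hPAdef
  set nA : List (Set X) → ℕ := fun l => (dec (Nat.unpair l.length).2).1 with hnAdef
  set VH : Set X → List (Set X) → Set Y := fun A' l => (sbox A' (PA l) (nA l)).2 with hVHdef
  set FNx : Set X → List (Set X) → Set Y :=
    fun A' l => FupF ((St l).2 ∪ {yptF (VH A' l), yptF (PA l)}) with hFNdef
  have hSt_nil : St [] = ([e₀], F₀) := rfl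
  have hSt_cons : ∀ (A' : Set X) (l : List (Set X)), St (A' :: l) =
      ((St l).1 ++ [mixFn ((St l).1.getD l.length e₀) (dnsF (FNx A' l))
        (yptF (VH A' l)) (yptF (PA l))], FNx A' l) := fun A' l => rfl
  have htM_nil : tM [] = u := rfl
  have htM_cons : ∀ (A' : Set X) (l : List (Set X)),
      tM (A' :: l) = (sbox A' (PA l) (nA l)).1 := fun A' l => rfl
  have hPA_def : ∀ l : List (Set X), PA l =
      σT (((St l).1.getD (Nat.unpair l.length).1 e₀) ((dec (Nat.unpair l.length).2).2.1))
        ((dec (Nat.unpair l.length).2).2.2.map ((St l).1.getD (Nat.unpair l.length).1 e₀)) :=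
    fun l => rfl
  have hPAprops : ∀ l : List (Set X), IsOpen (PA l) ∧ (PA l).Nonempty := by
    intro l
    rw [hPA_def]
    exact hσo _ _
  -- the Oxtoby hypotheses
  have h1 : ∀ l, LegalT tM l → IsOpen (tM l) ∧ (tM l).Nonempty := by
    intro l hl
    match l with
    | [] => exact ⟨huo, ⟨x₁, hx₁u⟩⟩
    | A' :: l' =>
      obtain ⟨_, hAo, hAne, _⟩ := hl
      have hb := hsbox A' (PA l') (nA l') hAo hAne (hPAprops l').1 (hPAprops l').2
      rw [htM_cons]
      exact ⟨hb.1, hb.2.1⟩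
  have h2 : ∀ l A', LegalT tM (A' :: l) → tM (A' :: l) ⊆ A' := by
    intro l A' _
    rw [htM_cons]
    exact hsb_sub1 A' _ _
  obtain ⟨A, hleg, xs, hxs⟩ := oxtoby tM h1 h2
  have hAopen : ∀ n, IsOpen (A n) := fun n => (hleg n).2.1
  have hAne : ∀ n, (A n).Nonempty := fun n => (hleg n).2.2.1
  have hAsub : ∀ n, A n ⊆ tM (hist A n) := fun n => (hleg n).2.2.2
  have hxsu : xs ∈ u := hAsub 0 (hxs 0)
  -- state along the play
  set Stm : ℕ → List (ℕ → Y) × Set Y := fun m => St (hist A m) with hStmdef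
  set esAt : ℕ → ℕ → Y := fun m => (Stm m).1.getD m e₀ with hesAtdef
  set Fm : ℕ → Set Y := fun m => (Stm m).2 with hFmdef
  have hist_len : ∀ m, (hist A m).length = m := by
    intro m
    induction m with
    | zero => rfl
    | succ m ih =>
      show (A m :: hist A m).length = m + 1
      simp [ih]
  have hlen : ∀ l : List (Set X), (St l).1.length = l.length + 1 := by
    intro l
    induction l with
    | nil => rfl
    | cons A' l ih =>
      rw [hSt_cons]
      simp [ih]
  have hinv : ∀ l : List (Set X), (St l).2 ∈ 𝓕 ∧
      Set.range ((St l).1.getD l.length e₀) ⊆ (St l).2 := by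
    intro l
    induction l with
    | nil =>
      refine ⟨hF₀mem, ?_⟩
      rw [hSt_nil]
      show Set.range ([e₀].getD 0 e₀) ⊆ F₀
      rw [List.getD_cons_zero]
      exact he₀range
    | cons A' l ih =>
      have hsep : SeparableSubspace ((St l).2 ∪ {yptF (VH A' l), yptF (PA l)}) :=
        hsepU _ ih.1 _ ((Set.countable_singleton _).insert _)
      have hFn := hFup _ hsep
      have hFnmem : FNx A' l ∈ 𝓕 := hFn.1
      have hFnsub : (St l).2 ∪ {yptF (VH A' l), yptF (PA l)} ⊆ FNx A' l := hFn.2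
      constructor
      · rw [hSt_cons]
        exact hFnmem
      · rw [hSt_cons]
        have hgd : (((St l).1 ++ [mixFn ((St l).1.getD l.length e₀) (dnsF (FNx A' l))
            (yptF (VH A' l)) (yptF (PA l))]).getD (A' :: l).length e₀) =
            mixFn ((St l).1.getD l.length e₀) (dnsF (FNx A' l))
              (yptF (VH A' l)) (yptF (PA l)) := by
          have hll : (A' :: l).length = (St l).1.length := by
            rw [hlen l]
            rfl
          rw [hll]
          exact getD_append_last _ _ _
        rw [hgd]
        refine (mixFn_range _ _ _ _).trans ?_
        intro y hy
        rcases hy with (hy | hy) | hy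
        · exact hFnsub (Or.inl (ih.2 hy))
        · exact (hdns _ hFnmem).1 hy
        · exact hFnsub (Or.inr hy)
  have hFmmem : ∀ m, Fm m ∈ 𝓕 := fun m => (hinv (hist A m)).1
  have hFmmono' : ∀ m, Fm m ⊆ Fm (m+1) := by
    intro m
    have hsep : SeparableSubspace ((Stm m).2 ∪
        {yptF (VH (A m) (hist A m)), yptF (PA (hist A m))}) :=
      hsepU _ (hFmmem m) _ ((Set.countable_singleton _).insert _)
    have h := (hFup _ hsep).2
    intro y hy
    exact h (Or.inl hy)
  have hstage : ∀ m s, s ≤ m → (Stm m).1.getD s e₀ = esAt s := by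
    intro m
    induction m with
    | zero =>
      intro s hs
      have : s = 0 := Nat.le_zero.1 hs
      subst this
      rfl
    | succ m ih =>
      intro s hs
      rcases Nat.eq_or_lt_of_le hs with h | h
      · subst h; rfl
      · have hsm : s ≤ m := Nat.lt_succ_iff.1 h
        have h1 : (Stm (m+1)).1 = (Stm m).1 ++ [mixFn ((Stm m).1.getD (hist A m).length e₀)
            (dnsF (FNx (A m) (hist A m))) (yptF (VH (A m) (hist A m)))
            (yptF (PA (hist A m)))] := by
          show (St (A m :: hist A m)).1 = _
          rw [hSt_cons]
        rw [h1, List.getD_append _ _ _ s (by rw [hlen, hist_len]; omega)]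
        exact ih s hsm
  have hesS : ∀ m, esAt (m+1) = mixFn (esAt m) (dnsF (Fm (m+1)))
      (yptF (VH (A m) (hist A m))) (yptF (PA (hist A m))) := by
    intro m
    have h1 : (Stm (m+1)).1 = (Stm m).1 ++ [mixFn ((Stm m).1.getD (hist A m).length e₀)
        (dnsF (FNx (A m) (hist A m))) (yptF (VH (A m) (hist A m)))
        (yptF (PA (hist A m)))] := by
      show (St (A m :: hist A m)).1 = _
      rw [hSt_cons]
    show (Stm (m+1)).1.getD (m+1) e₀ = _
    rw [h1]
    have hml : m + 1 = (Stm m).1.length := by rw [hlen, hist_len]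
    have hgl := getD_append_last (Stm m).1
      (mixFn ((Stm m).1.getD (hist A m).length e₀) (dnsF (FNx (A m) (hist A m)))
        (yptF (VH (A m) (hist A m))) (yptF (PA (hist A m)))) e₀
    rw [← hml] at hgl
    rw [hgl]
    have h2 : (Stm m).1.getD (hist A m).length e₀ = esAt m := by
      rw [hist_len]
    have h3 : Fm (m+1) = FNx (A m) (hist A m) := by
      show (St (A m :: hist A m)).2 = _
      rw [hSt_cons]
    rw [h2, ← h3]
  -- the countable set and its closure member
  set Qs : Set Y := ⋃ m, Set.range (esAt m) with hQsdef
  set SS : Set Y := closure (⋃ m, Fm m) with hSSdef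
  have hSSmem : SS ∈ 𝓕 := h𝓕.2.2 Fm hFmmem (monotone_nat_of_le_succ hFmmono')
  have hrangeF : ∀ m, Set.range (esAt m) ⊆ Fm m := by
    intro m
    have h := (hinv (hist A m)).2
    rw [hist_len] at h
    exact h
  have hQS : Qs ⊆ SS := by
    refine Set.iUnion_subset fun m => ?_
    refine (hrangeF m).trans ?_
    exact (Set.subset_iUnion Fm m).trans subset_closure
  have hesmono : ∀ m, Set.range (esAt m) ⊆ Set.range (esAt (m+1)) := by
    intro m
    rintro y ⟨j, hj⟩
    exact ⟨4 * j, by rw [hesS, mixFn_e]; exact hj⟩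
  have hesmono' : ∀ m m', m ≤ m' → Set.range (esAt m) ⊆ Set.range (esAt m') := by
    intro m m' h
    induction h with
    | refl => exact subset_rfl
    | step h ih => exact ih.trans (hesmono _)
  have hes0 : esAt 0 = e₀ := by
    show ([e₀].getD 0 e₀) = e₀
    rw [List.getD_cons_zero]
  have hFm0 : Fm 0 = F₀ := rfl
  have hdnsQ : ∀ m, Set.range (dnsF (Fm m)) ⊆ Qs := by
    intro m
    match m with
    | 0 =>
      rw [hFm0]
      refine hdnsF₀sub.trans ?_
      rw [← hes0]
      exact Set.subset_iUnion (fun m => Set.range (esAt m)) 0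
    | m + 1 =>
      rintro y ⟨j, hj⟩
      refine Set.mem_iUnion.2 ⟨m + 1, ⟨4 * j + 1, ?_⟩⟩
      rw [hesS, mixFn_d]
      exact hj
  have hQd : ∀ O : Set Y, IsOpen O → (O ∩ SS).Nonempty → (O ∩ Qs).Nonempty := by
    intro O hO ⟨z, hzO, hzS⟩
    obtain ⟨w, hwO, hwU⟩ := (mem_closure_iff.1 hzS) O hO hzO
    obtain ⟨m, hwm⟩ := Set.mem_iUnion.1 hwU
    have hwcl : w ∈ closure (Set.range (dnsF (Fm m))) := (hdns _ (hFmmem m)).2 hwm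
    obtain ⟨y, hyO, hyr⟩ := (mem_closure_iff.1 hwcl) O hO hwO
    exact ⟨y, hyO, hdnsQ m hyr⟩
  have hy₁SS : y₁ ∈ SS := subset_closure (Set.mem_iUnion.2 ⟨0, hFm0 ▸ hy₁F₀⟩)
  -- the task lemma: witness boxes along the play
  have htask : ∀ (n : ℕ) (q : Y) (h : List Y), q ∈ Qs → (∀ y ∈ h, y ∈ Qs) →
      ∃ V' : Set Y, IsOpen V' ∧ V' ⊆ σT q h ∧ (V' ∩ Qs).Nonempty ∧
        ∀ y ∈ V', (xs, y) ∈ E n := by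
    intro n q h hq hh
    -- common stage
    have hcommon : ∀ L : List Y, (∀ y ∈ L, y ∈ Qs) →
        ∃ s, ∀ y ∈ L, y ∈ Set.range (esAt s) := by
      intro L
      induction L with
      | nil => intro _; exact ⟨0, by simp⟩
      | cons a L ih =>
        intro hL
        obtain ⟨s1, hs1⟩ := ih (fun y hy => hL y (List.mem_cons_of_mem a hy))
        obtain ⟨s2, hs2⟩ := Set.mem_iUnion.1 (hL a List.mem_cons_self)
        refine ⟨max s1 s2, ?_⟩
        intro y hy
        rcases List.mem_cons.1 hy with rfl | hy
        · exact hesmono' s2 _ (le_max_right _ _) hs2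
        · exact hesmono' s1 _ (le_max_left _ _) (hs1 y hy)
    obtain ⟨s1, hs1⟩ := hcommon h hh
    obtain ⟨s2, hs2⟩ := Set.mem_iUnion.1 hq
    set s := max s2 s1 with hsdef
    have hqs : q ∈ Set.range (esAt s) := hesmono' s2 s (le_max_left _ _) hs2
    have hhs : ∀ y ∈ h, y ∈ Set.range (esAt s) :=
      fun y hy => hesmono' s1 s (le_max_right _ _) (hs1 y hy)
    obtain ⟨i, hi⟩ := hqs
    have hjsex : ∀ L : List Y, (∀ y ∈ L, y ∈ Set.range (esAt s)) →
        ∃ js : List ℕ, L = js.map (esAt s) := by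
      intro L
      induction L with
      | nil => intro _; exact ⟨[], rfl⟩
      | cons a L ih =>
        intro hL
        obtain ⟨js, hjs⟩ := ih (fun y hy => hL y (List.mem_cons_of_mem a hy))
        obtain ⟨k, hk⟩ := hL a List.mem_cons_self
        refine ⟨k :: js, ?_⟩
        rw [List.map_cons, ← hk, ← hjs]
    obtain ⟨js, hjs⟩ := hjsex h hhs
    set m₀ := Nat.pair s (Encodable.encode (n, i, js)) with hm₀def
    have hsm₀ : s ≤ m₀ := Nat.left_le_pair _ _
    have hunp : Nat.unpair m₀ = (s, Encodable.encode (n, i, js)) := Nat.unpair_pair _ _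
    have hlm₀ : (hist A m₀).length = m₀ := hist_len m₀
    have hesm₀ : (St (hist A m₀)).1.getD (Nat.unpair (hist A m₀).length).1 e₀ = esAt s := by
      rw [hlm₀, hunp]
      exact hstage m₀ s hsm₀
    have hdecm₀ : dec (Nat.unpair (hist A m₀).length).2 = (n, i, js) := by
      rw [hlm₀, hunp]
      exact hdec _
    have hPAm₀ : PA (hist A m₀) = σT q h := by
      rw [hPA_def, hesm₀, hdecm₀, ← hi, ← hjs]
    have hnm₀ : nA (hist A m₀) = n := by
      show (dec (Nat.unpair (hist A m₀).length).2).1 = n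
      rw [hdecm₀]
    have hbox := hsbox (A m₀) (PA (hist A m₀)) (nA (hist A m₀)) (hAopen m₀) (hAne m₀)
      (hPAprops _).1 (hPAprops _).2
    refine ⟨(sbox (A m₀) (PA (hist A m₀)) (nA (hist A m₀))).2, hbox.2.2.2.1, ?_, ?_, ?_⟩
    · rw [← hPAm₀]
      exact hbox.2.2.2.2.2.1
    · -- the absorbed point
      refine ⟨yptF (VH (A m₀) (hist A m₀)), ?_, ?_⟩
      · exact hypt _ hbox.2.2.2.2.1
      · refine Set.mem_iUnion.2 ⟨m₀ + 1, ⟨2, ?_⟩⟩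
        rw [hesS, mixFn_a]
    · -- small oscillation
      intro y hy
      have hxsbox : xs ∈ (sbox (A m₀) (PA (hist A m₀)) (nA (hist A m₀))).1 := by
        have h1' := hAsub (m₀ + 1) (hxs (m₀ + 1))
        rw [show hist A (m₀ + 1) = A m₀ :: hist A m₀ from rfl, htM_cons] at h1'
        exact h1'
      refine ⟨(sbox (A m₀) (PA (hist A m₀)) (nA (hist A m₀))).1 ×ˢ
        (sbox (A m₀) (PA (hist A m₀)) (nA (hist A m₀))).2,
        hbox.1.prod hbox.2.2.2.1, ⟨hxsbox, hy⟩, ?_⟩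
      intro a ha b hb
      have := hbox.2.2.2.2.2.2 a.1 ha.1 a.2 ha.2 b.1 hb.1 b.2 hb.2
      rw [hnm₀] at this
      simpa using this
  -- Baire category inside the member SS
  haveI hSSB : BaireSpace ↥SS := hBaire SS hSSmem
  set T : ℕ → Set ↥SS := fun n => {y : ↥SS | (xs, (y : Y)) ∈ E n} with hTdef
  have hTopen : ∀ n, IsOpen (T n) := by
    intro n
    have hc : Continuous fun y : ↥SS => ((xs, (y : Y)) : X × Y) :=
      continuous_const.prodMk continuous_subtype_val
    exact (hEopen n).preimage hc
  have hTdense : ∀ n, Dense (T n) := by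
    intro n
    rw [dense_iff_inter_open]
    intro U hU hUne
    obtain ⟨O, hOo, hOeq⟩ := isOpen_induced_iff.1 hU
    obtain ⟨yb, hybU⟩ := hUne
    have hybO : (yb : Y) ∈ O := by rw [← hOeq] at hybU; exact hybU
    have hOS : (O ∩ SS).Nonempty := ⟨yb, hybO, yb.2⟩
    obtain ⟨q, hqO, hqQ⟩ := hQd O hOo hOS
    obtain ⟨h, hhQ, hdens⟩ := wrel σT hσo hσw Qs SS hQS hQd O hOo q hqQ hqO
    obtain ⟨V', hV'o, hV'sub, ⟨yh, hyhV', hyhQ⟩, hV'E⟩ := htask n q h hqQ hhQ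
    have hne : (V' ∩ σT q h ∩ SS).Nonempty := ⟨yh, ⟨hyhV', hV'sub hyhV'⟩, hQS hyhQ⟩
    obtain ⟨y', hy'⟩ := hdens V' hV'o hne
    refine ⟨⟨y', hy'.2⟩, ?_, ?_⟩
    · rw [← hOeq]
      exact hy'.1.2
    · exact hV'E y' hy'.1.1.1
  have hdT : Dense (⋂ n, T n) := dense_iInter_of_isOpen hTopen hTdense
  have hUvne : (Subtype.val ⁻¹' v : Set ↥SS).Nonempty := ⟨⟨y₁, hy₁SS⟩, hy₁v⟩
  have hUvo : IsOpen (Subtype.val ⁻¹' v : Set ↥SS) := hvo.preimage continuous_subtype_val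
  obtain ⟨ystar, hyv', hyT⟩ := hdT.inter_open_nonempty _ hUvo hUvne
  refine ⟨(xs, (ystar : Y)), ?_, ?_⟩
  · exact huv ⟨hxsu, hyv'⟩
  · exact Set.mem_iInter.2 fun n => Set.mem_iInter.1 hyT n
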